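/- Fix an integer j ≥ 1 and n ≥ j + 2 with n ≥ 4. For a word s of length n-3 over {0,1} with no triple starting at any position strictly less than j-2 (when j ≥ 2), write s = w₁ q w₂ where w₁ has length j-2, q is a single letter, and w₂ is the remainder; define φ(s) = w₁ q q̄ q̄ q̄ w₂, where q̄ denotes the opposite letter. Then φ is an injection from {words of length n-3 with no triple starting before position j-2} into {words of length n whose first triple starts exactly at position j}, and moreover φ is a bijection onto that set when j ≥ 2. -/
import Mathlib


/-- `w` (a word over the two-letter alphabet, as a list of booleans) has three consecutive
equal letters starting at (0-indexed) position `k`. -/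
def TripleAtL (w : List Bool) (k : ℕ) : Prop :=
  k + 2 < w.length ∧ w.getD k false = w.getD (k + 1) false ∧
    w.getD (k + 1) false = w.getD (k + 2) false

lemma getD_take' (l : List Bool) (n k : ℕ) (h : k < n) :
    (l.take n).getD k false = l.getD k false := by
  rcases lt_or_ge k l.length with h2 | h2
  · rw [List.getD_eq_getElem _ _ (by simp [List.length_take]; omega),
      List.getD_eq_getElem _ _ h2]
    simp [List.getElem_take]
  · rw [List.getD_eq_default _ _ (by simp [List.length_take]; omega),
      List.getD_eq_default _ _ h2]

lemma getD_drop' (l : List Bool) (n k : ℕ) :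
    (l.drop n).getD k false = l.getD (n + k) false := by
  rcases lt_or_ge (n + k) l.length with h | h
  · rw [List.getD_eq_getElem _ _ (by simp [List.length_drop]; omega),
      List.getD_eq_getElem _ _ h]
    simp [List.getElem_drop]
  · rw [List.getD_eq_default _ _ (by simp [List.length_drop]; omega),
      List.getD_eq_default _ _ h]

lemma phi_getD (s : List Bool) (j k : ℕ) (b : Bool) (hj : 2 ≤ j) (hle : j - 1 ≤ s.length) :
    ((s.take (j-1) ++ [b,b,b]) ++ s.drop (j-1)).getD k false =
      if k < j - 1 then s.getD k false
      else if k < j + 2 then b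
      else s.getD (k - 3) false := by
  have hA : (s.take (j-1)).length = j - 1 := by simp [List.length_take]; omega
  have hAB : (s.take (j-1) ++ [b,b,b]).length = j + 2 := by
    simp [List.length_append, hA]; omega
  split_ifs with h1 h2
  · rw [List.getD_append _ _ _ _ (by omega), List.getD_append _ _ _ _ (by omega),
      getD_take' _ _ _ h1]
  · rw [List.getD_append _ _ _ _ (by omega), List.getD_append_right _ _ _ _ (by omega)]
    rw [hA]
    have : k - (j - 1) = 0 ∨ k - (j - 1) = 1 ∨ k - (j - 1) = 2 := by omega
    rcases this with h | h | h <;> rw [h] <;> rfl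
  · rw [List.getD_append_right _ _ _ _ (by omega), getD_drop', hAB]
    congr 1
    omega

lemma bool_flip {a c : Bool} (h : a ≠ c) : (!a) = c := by
  cases a <;> cases c <;> simp_all

/-- Inserting three copies of the opposite letter after the (1-indexed) position `j-1`
is a bijection from words of length `n-3` with no triple starting at a 1-indexed position
strictly less than `j-2` onto words of length `n` whose first triple starts exactly at
the 1-indexed position `j` (i.e. the 0-indexed position `j-1`). -/
theorem stmt_3 (n j : ℕ) (hj : 2 ≤ j) (hjn : j + 2 ≤ n) (hn : 4 ≤ n) :
    Set.BijOn
      (fun s : List Bool =>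
        s.take (j - 1) ++
          [!s.getD (j - 2) false, !s.getD (j - 2) false, !s.getD (j - 2) false] ++
          s.drop (j - 1))
      {s : List Bool | s.length = n - 3 ∧ ∀ k, k + 3 < j → ¬ TripleAtL s k}
      {t : List Bool | t.length = n ∧ TripleAtL t (j - 1) ∧
        ∀ k, k < j - 1 → ¬ TripleAtL t k} := by
  have hlenf : ∀ s : List Bool, s.length = n - 3 →
      ((s.take (j-1) ++ [!s.getD (j - 2) false, !s.getD (j - 2) false, !s.getD (j - 2) false])
        ++ s.drop (j-1)).length = n := by
    intro s hs
    simp [List.length_append, List.length_take, List.length_drop, hs]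
    omega
  refine ⟨?_, ?_, ?_⟩
  · -- MapsTo
    rintro s ⟨hlen, hnt⟩
    have hle : j - 1 ≤ s.length := by omega
    set b := !s.getD (j - 2) false with hb
    have hG := fun k => phi_getD s j k b hj hle
    refine ⟨hlenf s hlen, ⟨?_, ?_, ?_⟩, ?_⟩
    · rw [hlenf s hlen]; omega
    · rw [hG, hG, if_neg (by omega), if_pos (by omega), if_neg (by omega), if_pos (by omega)]
    · rw [hG, hG, if_neg (by omega), if_pos (by omega), if_neg (by omega), if_pos (by omega)]
    · rintro k hk ⟨hk2, e1, e2⟩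
      rw [hG, hG] at e1
      rw [hG, hG] at e2
      have hcase : k + 2 < j - 1 ∨ k + 2 = j - 1 ∨ k + 2 = j := by omega
      rcases hcase with h | h | h
      · rw [if_pos (by omega), if_pos (by omega)] at e1
        rw [if_pos (by omega), if_pos (by omega)] at e2
        exact hnt k (by omega) ⟨by omega, e1, e2⟩
      · rw [if_pos (by omega), if_neg (by omega), if_pos (by omega)] at e2
        have hk1 : k + 1 = j - 2 := by omega
        rw [hk1, hb] at e2
        simp at e2
      · rw [if_pos (by omega), if_neg (by omega), if_pos (by omega)] at e1
        rw [show k = j - 2 from by omega, hb] at e1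
        simp at e1
  · -- InjOn
    intro s1 hs1 s2 hs2 heq
    have key : ∀ s : List Bool, s.length = n - 3 →
        ∀ b : Bool, s = ((s.take (j-1) ++ [b,b,b]) ++ s.drop (j-1)).take (j-1) ++
          ((s.take (j-1) ++ [b,b,b]) ++ s.drop (j-1)).drop (j+2) := by
      intro s hs b
      have hA : (s.take (j-1)).length = j - 1 := by simp [List.length_take]; omega
      have hAB : (s.take (j-1) ++ [b,b,b]).length = j + 2 := by
        simp [List.length_append, hA]; omega
      rw [List.drop_left' hAB, List.append_assoc, List.take_left' hA,
        List.take_append_drop]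
    calc s1 = _ := key s1 hs1.1 _
    _ = _ := by rw [show ((s1.take (j-1) ++ _) ++ s1.drop (j-1)) = ((s2.take (j-1) ++ _) ++ s2.drop (j-1)) from heq]
    _ = s2 := (key s2 hs2.1 _).symm
  · -- SurjOn
    rintro t ⟨hlent, ⟨hlt3, e1, e2⟩, hmin⟩
    set s : List Bool := t.take (j-1) ++ t.drop (j+2) with hsdef
    have hslen : s.length = n - 3 := by
      simp [hsdef, List.length_append, List.length_take, List.length_drop, hlent]; omega
    have hTl : (t.take (j-1)).length = j - 1 := by simp [List.length_take]; omega
    have hsg : ∀ k, k < j - 1 → s.getD k false = t.getD k false := by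
      intro k hk
      rw [hsdef, List.getD_append _ _ _ _ (by omega), getD_take' _ _ _ hk]
    have hj1 : j - 1 + 1 = j := by omega
    have hj2 : j - 1 + 2 = j + 1 := by omega
    rw [hj1] at e1 e2
    rw [hj2] at e2
    have hne : t.getD (j-2) false ≠ t.getD (j-1) false := by
      intro h
      refine hmin (j-2) (by omega) ⟨by omega, ?_, ?_⟩
      · rw [show j - 2 + 1 = j - 1 from by omega]; exact h
      · rw [show j - 2 + 1 = j - 1 from by omega, show j - 2 + 2 = j from by omega]; exact e1
    have hbval : (!s.getD (j - 2) false) = t.getD (j-1) false := by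
      rw [hsg (j-2) (by omega)]; exact bool_flip hne
    refine ⟨s, ⟨hslen, ?_⟩, ?_⟩
    · rintro k hk ⟨hkl, a1, a2⟩
      rw [hsg k (by omega), hsg (k+1) (by omega)] at a1
      rw [hsg (k+1) (by omega), hsg (k+2) (by omega)] at a2
      exact hmin k (by omega) ⟨by omega, a1, a2⟩
    · show (s.take (j-1) ++ [!s.getD (j - 2) false, !s.getD (j - 2) false, !s.getD (j - 2) false])
        ++ s.drop (j-1) = t
      have hst : s.take (j-1) = t.take (j-1) := by
        rw [hsdef]; exact List.take_left' hTl
      have hsd : s.drop (j-1) = t.drop (j+2) := by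
        rw [hsdef]; exact List.drop_left' hTl
      have hb1 : j - 1 < t.length := by omega
      have hb2 : j < t.length := by omega
      have hb3 : j + 1 < t.length := by omega
      have c1 : (!s.getD (j - 2) false) = t[j-1]'hb1 := by
        rw [hbval]; exact List.getD_eq_getElem _ _ _
      have c2 : (!s.getD (j - 2) false) = t[j]'hb2 := by
        rw [hbval, e1]; exact List.getD_eq_getElem _ _ _
      have c3 : (!s.getD (j - 2) false) = t[j+1]'hb3 := by
        rw [hbval, e1, e2]; exact List.getD_eq_getElem _ _ _
      have hdrop : t.drop (j-1) = t[j-1]'hb1 :: t[j]'hb2 :: t[j+1]'hb3 :: t.drop (j+2) := by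
        rw [List.drop_eq_getElem_cons hb1, hj1, List.drop_eq_getElem_cons hb2,
          List.drop_eq_getElem_cons hb3]
      rw [hst, hsd]
      conv_rhs => rw [← List.take_append_drop (j-1) t, hdrop]
      rw [List.append_assoc]
      congr 1
      rw [← c1, ← c2, ← c3]
      rfl
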